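/- Let L = T^{⊕3} − 3·1 be the intensity matrix of the random single-bit-flip process on 3 bits, V the repetition-code encoding, R the majority-vote recovery, and L_c = r(R − 1) for r > 0. Then R ∘ e^{t(L + L_c)} ∘ V = α(t,r)·V + (1 − α(t,r))·S for some stochastic matrix S and α(t,r) ∈ [0,1], and for each fixed t > 0, the maximal such α(t,r) → 1 as r → ∞. -/

import Mathlib

open Matrix Filter

/-- Flip of the i-th bit, as an 8×8 permutation matrix on states of 3 bits. -/
def flip3 (i : Fin 3) : Matrix (Fin 3 → Bool) (Fin 3 → Bool) ℝ :=
  fun f g => if f = Function.update g i (!(g i)) then 1 else 0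

/-- Transition matrix flipping a uniformly chosen bit (sum of the three flips). -/
def T3 : Matrix (Fin 3 → Bool) (Fin 3 → Bool) ℝ := ∑ i, flip3 i

/-- Majority of three bits. -/
def maj (f : Fin 3 → Bool) : Bool := (f 0 && f 1) || (f 0 && f 2) || (f 1 && f 2)

/-- Majority-vote recovery matrix. -/
def Rmaj : Matrix (Fin 3 → Bool) (Fin 3 → Bool) ℝ :=
  fun f g => if f = (fun _ => maj g) then 1 else 0

/-- Repetition-code encoding 0 ↦ 000, 1 ↦ 111. -/
def Venc : Matrix (Fin 3 → Bool) Bool ℝ :=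
  fun f b => if f = (fun _ => b) then 1 else 0

/-- Matrix exponential via its power series. -/
noncomputable def mexp {ι : Type} [Fintype ι] [DecidableEq ι] (A : Matrix ι ι ℝ) : Matrix ι ι ℝ :=
  ∑' k : ℕ, ((Nat.factorial k : ℝ))⁻¹ • A ^ k

/-- Column-stochastic matrix. -/
def IsStochastic {ι κ : Type} [Fintype ι] (S : Matrix ι κ ℝ) : Prop :=
  (∀ i j, 0 ≤ S i j) ∧ ∀ j, ∑ i, S i j = 1

/-- The set of admissible coefficients α(t,r) in the decomposition
    R ∘ e^{t(L+L_c)} ∘ V = α V + (1-α) S. -/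
def alphaSet (t r : ℝ) : Set ℝ :=
  {α | 0 ≤ α ∧ α ≤ 1 ∧ ∃ S : Matrix (Fin 3 → Bool) Bool ℝ, IsStochastic S ∧
    Rmaj * mexp (t • ((T3 - (3 : ℝ) • 1) + r • (Rmaj - 1))) * Venc
      = α • Venc + (1 - α) • S}

set_option linter.unreachableTactic false
set_option linter.unusedTactic false

abbrev St := Fin 3 → Bool

lemma mexp_eq_exp {ι : Type} [Fintype ι] [DecidableEq ι] (A : Matrix ι ι ℝ) :
    mexp A = NormedSpace.exp A := by
  rw [NormedSpace.exp_eq_tsum ℝ]; rfl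

lemma exp_smul_one (c : ℝ) {ι : Type} [Fintype ι] [DecidableEq ι] :
    NormedSpace.exp (c • (1 : Matrix ι ι ℝ)) = Real.exp c • (1 : Matrix ι ι ℝ) := by
  have h1 : ∀ (c : ℝ), c • (1 : Matrix ι ι ℝ) = Matrix.diagonal (fun _ => c) := by
    intro c; ext f g
    by_cases h : f = g <;> simp [Matrix.diagonal_apply, Matrix.one_apply, h]
  rw [h1, Matrix.exp_diagonal]
  have h2 : NormedSpace.exp (fun _ : ι => c) = fun _ : ι => Real.exp c := by
    rw [Pi.exp_def]
    funext i
    rw [Real.exp_eq_exp_ℝ]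
  rw [h2, h1]

lemma key_split {ι : Type} [Fintype ι] [DecidableEq ι] (A : Matrix ι ι ℝ) (c : ℝ) :
    mexp (A - c • 1) = Real.exp (-c) • mexp A := by
  rw [mexp_eq_exp, mexp_eq_exp]
  have : A - c • 1 = (-c) • (1 : Matrix ι ι ℝ) + A := by module
  rw [this, Matrix.exp_add_of_commute _ _ ((Commute.one_left A).smul_left (-c)),
    exp_smul_one, Matrix.smul_mul, Matrix.one_mul]

noncomputable def NN (r : ℝ) : Matrix St St ℝ := T3 + r • Rmaj

lemma hGN (t r : ℝ) :
    t • ((T3 - (3 : ℝ) • 1) + r • (Rmaj - 1)) = t • NN r - (t * (3 + r)) • 1 := by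
  unfold NN; module

lemma NN_nonneg {r : ℝ} (hr : 0 ≤ r) (f g : St) : 0 ≤ NN r f g := by
  unfold NN T3
  simp only [Matrix.add_apply, Matrix.smul_apply, Matrix.sum_apply, smul_eq_mul]
  have h1 : (0:ℝ) ≤ ∑ i : Fin 3, flip3 i f g := by
    apply Finset.sum_nonneg; intro i _; unfold flip3; positivity
  have h2 : (0:ℝ) ≤ Rmaj f g := by unfold Rmaj; positivity
  positivity

lemma sum_flip3 (i : Fin 3) (g : St) : ∑ f : St, flip3 i f g = 1 := by
  unfold flip3
  rw [Finset.sum_ite_eq' (Finset.univ) (Function.update g i (!(g i))) (fun _ => (1:ℝ))]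
  simp

lemma sum_Rmaj (g : St) : ∑ f : St, Rmaj f g = 1 := by
  unfold Rmaj
  rw [Finset.sum_ite_eq' (Finset.univ) (fun _ => maj g) (fun _ => (1:ℝ))]
  simp

lemma sum_NN (r : ℝ) (g : St) : ∑ f : St, NN r f g = 3 + r := by
  unfold NN T3
  simp only [Matrix.add_apply, Matrix.smul_apply, Matrix.sum_apply, smul_eq_mul]
  rw [Finset.sum_add_distrib, ← Finset.mul_sum, sum_Rmaj, Finset.sum_comm]
  have : ∀ i : Fin 3, ∑ f : St, flip3 i f g = 1 := fun i => sum_flip3 i g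
  rw [Finset.sum_congr rfl (fun i _ => this i)]
  norm_num

lemma NNpow_nonneg {r : ℝ} (hr : 0 ≤ r) (k : ℕ) (f g : St) : 0 ≤ (NN r ^ k) f g := by
  induction k generalizing f g with
  | zero => simp [Matrix.one_apply]; positivity
  | succ k ih =>
    rw [pow_succ, Matrix.mul_apply]
    exact Finset.sum_nonneg fun h _ => mul_nonneg (ih f h) (NN_nonneg hr h g)

lemma sum_NNpow (r : ℝ) (k : ℕ) (g : St) : ∑ f : St, (NN r ^ k) f g = (3 + r) ^ k := by
  induction k generalizing g with
  | zero => simp [Matrix.one_apply]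
  | succ k ih =>
    rw [pow_succ']
    simp only [Matrix.mul_apply]
    rw [Finset.sum_comm]
    have : ∀ h : St, ∑ f : St, NN r f h * (NN r ^ k) h g
        = (NN r ^ k) h g * (3+r) := by
      intro h; rw [← Finset.sum_mul, sum_NN]; ring
    rw [Finset.sum_congr rfl (fun h _ => this h), ← Finset.sum_mul, ih g]
    ring

lemma NNpow_le {r : ℝ} (hr : 0 ≤ r) (k : ℕ) (f g : St) : (NN r ^ k) f g ≤ (3 + r) ^ k := by
  rw [← sum_NNpow r k g]
  exact Finset.single_le_sum (fun h _ => NNpow_nonneg hr k h g) (Finset.mem_univ f)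

lemma mexp_apply {ι : Type} [Fintype ι] [DecidableEq ι] (A : Matrix ι ι ℝ)
    (h : ∀ f g, Summable fun k : ℕ => ((Nat.factorial k : ℝ))⁻¹ * ((A ^ k) f g)) (f g : ι) :
    mexp A f g = ∑' k : ℕ, ((Nat.factorial k : ℝ))⁻¹ * ((A ^ k) f g) := by
  have H : HasSum (fun k : ℕ => ((Nat.factorial k : ℝ))⁻¹ • A ^ k)
      (fun f g => ∑' k : ℕ, ((Nat.factorial k : ℝ))⁻¹ * ((A ^ k) f g)) := by
    apply Pi.hasSum.mpr
    intro f
    apply Pi.hasSum.mpr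
    intro g
    exact (h f g).hasSum
  have : mexp A = fun f g => ∑' k : ℕ, ((Nat.factorial k : ℝ))⁻¹ * ((A ^ k) f g) :=
    H.tsum_eq
  exact congrFun (congrFun this f) g

lemma summable_bound (t r : ℝ) (ht : 0 ≤ t) (hr : 0 ≤ r) (f g : St) :
    Summable fun k : ℕ => ((Nat.factorial k : ℝ))⁻¹ * (((t • NN r) ^ k) f g) := by
  refine Summable.of_nonneg_of_le ?_ ?_ (Real.summable_pow_div_factorial (t * (3 + r)))
  · intro k
    rw [smul_pow, Matrix.smul_apply, smul_eq_mul]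
    have := NNpow_nonneg hr k f g
    positivity
  · intro k
    rw [smul_pow, Matrix.smul_apply, smul_eq_mul, div_eq_inv_mul, mul_pow]
    have h1 : ((NN r) ^ k) f g ≤ (3 + r) ^ k := NNpow_le hr k f g
    have h2 : (0:ℝ) ≤ t ^ k := by positivity
    have h3 : (0:ℝ) ≤ ((Nat.factorial k : ℝ))⁻¹ := by positivity
    have h4 := NNpow_nonneg hr k f g
    apply mul_le_mul_of_nonneg_left _ h3
    exact mul_le_mul_of_nonneg_left h1 h2

noncomputable def PP (t r : ℝ) : Matrix St St ℝ :=
  mexp (t • ((T3 - (3 : ℝ) • 1) + r • (Rmaj - 1)))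

lemma PP_eq (t r : ℝ) : PP t r = Real.exp (-(t * (3 + r))) • mexp (t • NN r) := by
  rw [PP, hGN, key_split]

lemma PP_apply (t r : ℝ) (ht : 0 ≤ t) (hr : 0 ≤ r) (f g : St) :
    PP t r f g = Real.exp (-(t * (3 + r))) *
      ∑' k : ℕ, ((Nat.factorial k : ℝ))⁻¹ * (t ^ k * ((NN r ^ k) f g)) := by
  rw [PP_eq, Matrix.smul_apply, smul_eq_mul,
    mexp_apply _ (summable_bound t r ht hr)]
  congr 1
  apply tsum_congr
  intro k
  rw [smul_pow, Matrix.smul_apply, smul_eq_mul]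

lemma PP_nonneg (t r : ℝ) (ht : 0 ≤ t) (hr : 0 ≤ r) (f g : St) : 0 ≤ PP t r f g := by
  rw [PP_apply t r ht hr]
  apply mul_nonneg (Real.exp_nonneg _)
  apply tsum_nonneg
  intro k
  have := NNpow_nonneg hr k f g
  positivity

lemma sum_PP (t r : ℝ) (ht : 0 ≤ t) (hr : 0 ≤ r) (g : St) :
    ∑ f : St, PP t r f g = 1 := by
  have hsummable : ∀ f : St, Summable fun k : ℕ =>
      ((Nat.factorial k : ℝ))⁻¹ * (t ^ k * ((NN r ^ k) f g)) := by
    intro f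
    have := summable_bound t r ht hr f g
    apply this.congr
    intro k
    rw [smul_pow, Matrix.smul_apply, smul_eq_mul]
  rw [Finset.sum_congr rfl (fun f _ => PP_apply t r ht hr f g), ← Finset.mul_sum,
    ← Summable.tsum_finsetSum (fun f _ => hsummable f)]
  have : ∀ k : ℕ, (∑ f : St, ((Nat.factorial k : ℝ))⁻¹ * (t ^ k * ((NN r ^ k) f g)))
      = (t * (3 + r)) ^ k / (Nat.factorial k) := by
    intro k
    rw [← Finset.mul_sum, ← Finset.mul_sum, sum_NNpow, mul_pow]
    ring
  rw [tsum_congr this]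
  have hexp : ∑' k : ℕ, (t * (3 + r)) ^ k / (Nat.factorial k) = Real.exp (t * (3 + r)) := by
    rw [Real.exp_eq_exp_ℝ, NormedSpace.exp_eq_tsum_div]
  rw [hexp, ← Real.exp_add]
  norm_num

noncomputable def phi (r : ℝ) (b : Bool) (f : St) : ℝ :=
  if maj f ≠ b then 1 else if f = (fun _ => b) then 0 else 2/(3+r)

lemma phi_nonneg {r : ℝ} (hr : 0 ≤ r) (b : Bool) (f : St) : 0 ≤ phi r b f := by
  unfold phi
  split
  · norm_num
  · split
    · norm_num
    · positivity

lemma phi_const (r : ℝ) (b : Bool) : phi r b (fun _ => b) = 0 := by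
  cases b <;> simp [phi, maj]

lemma phi_ge_ind (r : ℝ) (b : Bool) (f : St) (h : maj f ≠ b) : phi r b f = 1 := by
  simp [phi, h]

lemma vec_N (r : ℝ) (b : Bool) (g : St) :
    ∑ f : St, phi r b f * NN r f g
      = (∑ i : Fin 3, phi r b (Function.update g i (!(g i)))) + r * phi r b (fun _ => maj g) := by
  unfold NN T3
  simp only [Matrix.add_apply, Matrix.smul_apply, Matrix.sum_apply, smul_eq_mul]
  have key : ∀ f : St, phi r b f * ((∑ i : Fin 3, flip3 i f g) + r * Rmaj f g)
      = (∑ i : Fin 3, phi r b f * flip3 i f g) + r * (phi r b f * Rmaj f g) := by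
    intro f; rw [mul_add, Finset.mul_sum]; ring
  rw [Finset.sum_congr rfl (fun f _ => key f), Finset.sum_add_distrib, Finset.sum_comm]
  congr 1
  · apply Finset.sum_congr rfl
    intro i _
    have : ∀ f : St, phi r b f * flip3 i f g
        = if f = Function.update g i (!(g i)) then phi r b f else 0 := by
      intro f; unfold flip3; split <;> simp
    rw [Finset.sum_congr rfl (fun f _ => this f),
      Finset.sum_ite_eq' Finset.univ _ (phi r b)]
    simp
  · rw [← Finset.mul_sum]
    congr 1
    have : ∀ f : St, phi r b f * Rmaj f g
        = if f = (fun _ => maj g) then phi r b f else 0 := by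
      intro f; unfold Rmaj; split <;> simp
    rw [Finset.sum_congr rfl (fun f _ => this f),
      Finset.sum_ite_eq' Finset.univ _ (phi r b)]
    simp

lemma upd0 (v : St) (w : Bool) : Function.update v 0 w = ![w, v 1, v 2] := by
  funext i; fin_cases i <;> simp [Function.update]

lemma upd1 (v : St) (w : Bool) : Function.update v 1 w = ![v 0, w, v 2] := by
  funext i; fin_cases i <;> simp [Function.update]

lemma upd2 (v : St) (w : Bool) : Function.update v 2 w = ![v 0, v 1, w] := by
  funext i; fin_cases i <;> simp [Function.update]

lemma phi_step {r : ℝ} (hr : 0 < r) (b : Bool) (g : St) :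
    ∑ f : St, phi r b f * NN r f g ≤ (3 + r) * phi r b g + 6 / (3 + r) := by
  rw [vec_N]
  have h3r : (0:ℝ) < 3 + r := by linarith
  obtain ⟨x, y, z, rfl⟩ : ∃ x y z, g = ![x, y, z] :=
    ⟨g 0, g 1, g 2, by funext i; fin_cases i <;> rfl⟩
  rw [Fin.sum_univ_three, upd0, upd1, upd2]
  cases x <;> cases y <;> cases z <;> cases b <;>
    simp (config := { decide := true }) [phi, maj] <;>
    (try rw [mul_div_assoc, mul_div_cancel_left₀ _ (ne_of_gt h3r)]) <;>
    first
      | linarith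
      | (field_simp;
         (first | rw [div_le_div_iff h3r h3r] | rw [le_div_iff h3r] | rw [div_le_iff h3r] | skip);
         nlinarith [sq_nonneg r])

lemma phi_pow {r : ℝ} (hr : 0 < r) (b : Bool) (k : ℕ) (g : St) :
    ∑ f : St, phi r b f * ((NN r ^ k) f g)
      ≤ (3 + r) ^ k * phi r b g + (k : ℝ) * (6 / (3 + r)) * (3 + r) ^ (k - 1) := by
  have h3r : (0:ℝ) < 3 + r := by linarith
  induction k generalizing g with
  | zero =>
    simp only [pow_zero, Matrix.one_apply, mul_ite, mul_one, mul_zero]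
    rw [Finset.sum_ite_eq' Finset.univ g (phi r b)]
    simp
  | succ k ih =>
    have expand : ∑ f : St, phi r b f * ((NN r ^ (k+1)) f g)
        = ∑ h : St, (∑ f : St, phi r b f * ((NN r ^ k) f h)) * NN r h g := by
      rw [pow_succ]
      simp only [Matrix.mul_apply, Finset.mul_sum, Finset.sum_mul]
      rw [Finset.sum_comm]
      apply Finset.sum_congr rfl
      intro h _
      apply Finset.sum_congr rfl
      intro f _
      ring
    rw [expand]
    have step1 : ∑ h : St, (∑ f : St, phi r b f * ((NN r ^ k) f h)) * NN r h g
        ≤ ∑ h : St, ((3 + r) ^ k * phi r b h + (k : ℝ) * (6 / (3 + r)) * (3 + r) ^ (k - 1))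
            * NN r h g := by
      apply Finset.sum_le_sum
      intro h _
      exact mul_le_mul_of_nonneg_right (ih h) (NN_nonneg hr.le h g)
    refine step1.trans ?_
    have expand2 : ∑ h : St, ((3 + r) ^ k * phi r b h + (k : ℝ) * (6 / (3 + r)) * (3 + r) ^ (k - 1))
            * NN r h g
        = (3 + r) ^ k * (∑ h : St, phi r b h * NN r h g)
          + (k : ℝ) * (6 / (3 + r)) * (3 + r) ^ (k - 1) * (3 + r) := by
      rw [Finset.sum_congr rfl (fun h _ => by ring :
        ∀ h ∈ Finset.univ, ((3 + r) ^ k * phi r b h + (k : ℝ) * (6 / (3 + r)) * (3 + r) ^ (k - 1))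
            * NN r h g = (3 + r) ^ k * (phi r b h * NN r h g)
              + (k : ℝ) * (6 / (3 + r)) * (3 + r) ^ (k - 1) * NN r h g)]
      rw [Finset.sum_add_distrib, ← Finset.mul_sum, ← Finset.mul_sum, sum_NN]
    rw [expand2]
    have hks : (k : ℝ) * (6 / (3 + r)) * (3 + r) ^ (k - 1) * (3 + r)
        = (k : ℝ) * (6 / (3 + r)) * (3 + r) ^ k := by
      cases k with
      | zero => simp
      | succ k =>
        simp only [Nat.succ_sub_one]
        ring
    rw [hks]
    have hstep := phi_step hr b g
    have hpow : (0:ℝ) ≤ (3 + r) ^ k := by positivity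
    have := mul_le_mul_of_nonneg_left hstep hpow
    have e1 : (3 + r) ^ k * ((3 + r) * phi r b g + 6 / (3 + r))
        = (3 + r) ^ (k + 1) * phi r b g + (6 / (3 + r)) * (3 + r) ^ k := by ring
    rw [e1] at this
    push_cast
    linarith [this]

lemma summable_entry (t r : ℝ) (ht : 0 ≤ t) (hr : 0 ≤ r) (f g : St) :
    Summable fun k : ℕ => ((Nat.factorial k : ℝ))⁻¹ * (t ^ k * ((NN r ^ k) f g)) := by
  have := summable_bound t r ht hr f g
  apply this.congr
  intro k
  rw [smul_pow, Matrix.smul_apply, smul_eq_mul]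

lemma bad_bound (t r : ℝ) (ht : 0 < t) (hr : 0 < r) (b : Bool) :
    ∑ f : St, phi r b f * PP t r f (fun _ => b) ≤ 6 * t / (3 + r) := by
  have h3r : (0:ℝ) < 3 + r := by linarith
  set cb : St := fun _ => b with hcb
  set E : ℝ := Real.exp (-(t * (3 + r))) with hE
  set B : ℕ → ℝ := fun k => ((Nat.factorial k : ℝ))⁻¹ * t ^ k
      * ((k : ℝ) * (6 / (3 + r)) * (3 + r) ^ (k - 1)) with hB
  have hBsucc : ∀ k : ℕ, B (k + 1)
      = (6 / (3 + r)) * t * ((t * (3 + r)) ^ k / (Nat.factorial k)) := by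
    intro k
    have hfk : (Nat.factorial k : ℝ) ≠ 0 := Nat.cast_ne_zero.mpr (Nat.factorial_ne_zero k)
    simp only [hB, Nat.factorial_succ, Nat.succ_sub_one, mul_pow]
    push_cast
    field_simp
    ring
  have hBsummable : Summable B := by
    rw [← summable_nat_add_iff 1]
    apply Summable.congr (((Real.summable_pow_div_factorial (t * (3 + r))).mul_left
      ((6 / (3 + r)) * t)))
    intro k
    rw [hBsucc k]
    try ring
  have htsumB : ∑' k, B k = (6 / (3 + r)) * t * Real.exp (t * (3 + r)) := by
    rw [Summable.tsum_eq_zero_add hBsummable]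
    have hB0 : B 0 = 0 := by simp [hB]
    rw [hB0, zero_add]
    have : ∀ k : ℕ, B (k + 1) = ((6 / (3 + r)) * t) * ((t * (3 + r)) ^ k / (Nat.factorial k)) :=
      hBsucc
    rw [tsum_congr this, tsum_mul_left, Real.exp_eq_exp_ℝ, NormedSpace.exp_eq_tsum_div]
  have hterm : ∀ k : ℕ, ∑ f : St, phi r b f
        * (((Nat.factorial k : ℝ))⁻¹ * (t ^ k * ((NN r ^ k) f cb))) ≤ B k := by
    intro k
    have e1 : ∑ f : St, phi r b f * (((Nat.factorial k : ℝ))⁻¹ * (t ^ k * ((NN r ^ k) f cb)))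
        = ((Nat.factorial k : ℝ))⁻¹ * t ^ k * ∑ f : St, phi r b f * ((NN r ^ k) f cb) := by
      rw [Finset.mul_sum]
      apply Finset.sum_congr rfl
      intro f _
      ring
    rw [e1, hB]
    have h2 := phi_pow hr b k cb
    have h3 : phi r b cb = 0 := phi_const r b
    rw [h3, mul_zero, zero_add] at h2
    have h4 : (0:ℝ) ≤ ((Nat.factorial k : ℝ))⁻¹ * t ^ k := by positivity
    calc ((Nat.factorial k : ℝ))⁻¹ * t ^ k * ∑ f : St, phi r b f * ((NN r ^ k) f cb)
        ≤ ((Nat.factorial k : ℝ))⁻¹ * t ^ k * ((k : ℝ) * (6 / (3 + r)) * (3 + r) ^ (k - 1)) :=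
          mul_le_mul_of_nonneg_left h2 h4
      _ = _ := by ring
  have hLHSsummable : Summable fun k : ℕ => ∑ f : St, phi r b f
      * (((Nat.factorial k : ℝ))⁻¹ * (t ^ k * ((NN r ^ k) f cb))) := by
    refine Summable.of_nonneg_of_le ?_ hterm hBsummable
    intro k
    apply Finset.sum_nonneg
    intro f _
    have h5 := NNpow_nonneg hr.le k f cb
    have h6 := phi_nonneg hr.le b f
    positivity
  -- now rewrite the sum
  have per_f : ∀ f : St, phi r b f * PP t r f cb
      = ∑' k : ℕ, E * (phi r b f
          * (((Nat.factorial k : ℝ))⁻¹ * (t ^ k * ((NN r ^ k) f cb)))) := by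
    intro f
    rw [PP_apply t r ht.le hr.le f cb, ← hE, ← tsum_mul_left, ← tsum_mul_left]
    apply tsum_congr
    intro k
    ring
  have main : ∑ f : St, phi r b f * PP t r f cb
      = E * ∑' k : ℕ, ∑ f : St, phi r b f
          * (((Nat.factorial k : ℝ))⁻¹ * (t ^ k * ((NN r ^ k) f cb))) := by
    rw [Finset.sum_congr rfl (fun f _ => per_f f),
      ← Summable.tsum_finsetSum (fun (f : St) _ =>
        (((summable_entry t r ht.le hr.le f cb).mul_left (phi r b f)).mul_left E)),
      ← tsum_mul_left]
    apply tsum_congr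
    intro k
    rw [Finset.mul_sum]
  rw [main]
  have hbound : ∑' k : ℕ, ∑ f : St, phi r b f
      * (((Nat.factorial k : ℝ))⁻¹ * (t ^ k * ((NN r ^ k) f cb)))
      ≤ (6 / (3 + r)) * t * Real.exp (t * (3 + r)) := by
    rw [← htsumB]
    exact Summable.tsum_le_tsum hterm hLHSsummable hBsummable
  have hEpos : 0 ≤ E := Real.exp_nonneg _
  calc E * ∑' k : ℕ, ∑ f : St, phi r b f
        * (((Nat.factorial k : ℝ))⁻¹ * (t ^ k * ((NN r ^ k) f cb)))
      ≤ E * ((6 / (3 + r)) * t * Real.exp (t * (3 + r))) :=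
        mul_le_mul_of_nonneg_left hbound hEpos
    _ = 6 * t / (3 + r) := by
        rw [hE]
        rw [mul_comm (Real.exp (-(t * (3 + r))))]
        rw [mul_assoc, ← Real.exp_add]
        simp
        ring

lemma const_eq_iff (x y : Bool) : ((fun _ : Fin 3 => x) = fun _ => y) ↔ x = y :=
  ⟨fun h => congrFun h 0, fun h => by rw [h]⟩

noncomputable def MM (t r : ℝ) : Matrix St Bool ℝ := Rmaj * PP t r * Venc

lemma MM_apply (t r : ℝ) (f : St) (b : Bool) :
    MM t r f b = ∑ h : St, Rmaj f h * PP t r h (fun _ => b) := by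
  unfold MM
  rw [Matrix.mul_apply]
  have : ∀ g : St, (Rmaj * PP t r) f g * Venc g b
      = if g = (fun _ => b) then (Rmaj * PP t r) f g else 0 := by
    intro g; unfold Venc; split <;> simp
  rw [Finset.sum_congr rfl (fun g _ => this g),
    Finset.sum_ite_eq' Finset.univ (fun _ => b) ((Rmaj * PP t r) f)]
  simp [Matrix.mul_apply]

lemma MM_nonneg (t r : ℝ) (ht : 0 ≤ t) (hr : 0 ≤ r) (f : St) (b : Bool) :
    0 ≤ MM t r f b := by
  rw [MM_apply]
  apply Finset.sum_nonneg
  intro h _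
  have h1 : 0 ≤ Rmaj f h := by unfold Rmaj; positivity
  exact mul_nonneg h1 (PP_nonneg t r ht hr h _)

lemma sum_MM (t r : ℝ) (ht : 0 ≤ t) (hr : 0 ≤ r) (b : Bool) :
    ∑ f : St, MM t r f b = 1 := by
  rw [Finset.sum_congr rfl (fun f _ => MM_apply t r f b), Finset.sum_comm]
  have : ∀ h : St, ∑ f : St, Rmaj f h * PP t r h (fun _ => b)
      = PP t r h (fun _ => b) := by
    intro h
    rw [← Finset.sum_mul, sum_Rmaj, one_mul]
  rw [Finset.sum_congr rfl (fun h _ => this h), sum_PP t r ht hr]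

lemma MM_diag_ge (t r : ℝ) (ht : 0 < t) (hr : 0 < r) (b : Bool) :
    1 - 6 * t / (3 + r) ≤ MM t r (fun _ => b) b := by
  have key : ∀ h : St, Rmaj (fun _ => b) h = if maj h = b then 1 else 0 := by
    intro h
    unfold Rmaj
    by_cases hm : maj h = b
    · rw [if_pos hm, if_pos ((const_eq_iff b (maj h)).mpr hm.symm)]
    · rw [if_neg hm, if_neg (fun hc => hm ((const_eq_iff b (maj h)).mp hc).symm)]
  set cb : St := fun _ => b
  have hsplit : MM t r cb b + ∑ h : St, (if maj h = b then 0 else PP t r h cb) = 1 := by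
    rw [MM_apply, ← Finset.sum_add_distrib]
    have : ∀ h : St, Rmaj cb h * PP t r h cb + (if maj h = b then 0 else PP t r h cb)
        = PP t r h cb := by
      intro h
      rw [key h]
      by_cases hm : maj h = b <;> simp [hm]
    rw [Finset.sum_congr rfl (fun h _ => this h), sum_PP t r ht.le hr.le]
  have hbad : ∑ h : St, (if maj h = b then 0 else PP t r h cb) ≤ 6 * t / (3 + r) := by
    refine le_trans ?_ (bad_bound t r ht hr b)
    apply Finset.sum_le_sum
    intro h _
    by_cases hm : maj h = b
    · rw [if_pos hm]
      exact mul_nonneg (phi_nonneg hr.le b h) (PP_nonneg t r ht.le hr.le h cb)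
    · rw [if_neg hm, phi_ge_ind r b h hm, one_mul]
  linarith

lemma sum_Venc (b : Bool) : ∑ f : St, Venc f b = 1 := by
  unfold Venc
  rw [Finset.sum_ite_eq' Finset.univ (fun _ => b) (fun _ => (1:ℝ))]
  simp

lemma mem_alphaSet (t r : ℝ) (ht : 0 < t) (hr : 0 < r) :
    1 - min 1 (6 * t / (3 + r)) ∈ alphaSet t r := by
  have h3r : (0:ℝ) < 3 + r := by linarith
  set q : ℝ := min 1 (6 * t / (3 + r)) with hqdef
  have hq0 : 0 < q := lt_min one_pos (by positivity)
  have hq1 : q ≤ 1 := min_le_left _ _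
  have hMeq : Rmaj * mexp (t • ((T3 - (3 : ℝ) • 1) + r • (Rmaj - 1))) * Venc = MM t r := rfl
  refine ⟨by linarith, by linarith, q⁻¹ • (MM t r - (1 - q) • Venc), ?_, ?_⟩
  · constructor
    · intro f b
      rw [Matrix.smul_apply, Matrix.sub_apply, Matrix.smul_apply, smul_eq_mul, smul_eq_mul]
      apply mul_nonneg (by positivity)
      by_cases hf : f = (fun _ => b)
      · have hv : Venc f b = 1 := by unfold Venc; rw [if_pos hf]
        rw [hv, mul_one, sub_nonneg, hf]
        rcases min_cases 1 (6 * t / (3 + r)) with ⟨hmin, _⟩ | ⟨hmin, hle⟩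
        · rw [hqdef, hmin]
          simpa using MM_nonneg t r ht.le hr.le (fun _ => b) b
        · rw [hqdef, hmin]
          exact MM_diag_ge t r ht hr b
      · have hv : Venc f b = 0 := by unfold Venc; rw [if_neg hf]
        rw [hv, mul_zero, sub_zero]
        exact MM_nonneg t r ht.le hr.le f b
    · intro b
      have : ∀ f : St, (q⁻¹ • (MM t r - (1 - q) • Venc)) f b
          = q⁻¹ * (MM t r f b - (1 - q) * Venc f b) := by
        intro f
        rw [Matrix.smul_apply, Matrix.sub_apply, Matrix.smul_apply, smul_eq_mul, smul_eq_mul]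
      rw [Finset.sum_congr rfl (fun f _ => this f), ← Finset.mul_sum,
        Finset.sum_sub_distrib, ← Finset.mul_sum, sum_MM t r ht.le hr.le, sum_Venc]
      field_simp
      ring
  · rw [hMeq]
    rw [smul_smul, sub_sub_cancel, mul_inv_cancel₀ (ne_of_gt hq0), one_smul]
    abel

lemma alphaSet_bddAbove (t r : ℝ) : BddAbove (alphaSet t r) :=
  ⟨1, fun _ ha => ha.2.1⟩

theorem classical_continuous_error_correction :
    (∀ t r : ℝ, 0 < t → 0 < r → (alphaSet t r).Nonempty) ∧
    ∀ t : ℝ, 0 < t → Tendsto (fun r => sSup (alphaSet t r)) atTop (nhds 1) := by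
  constructor
  · intro t r ht hr
    exact ⟨_, mem_alphaSet t r ht hr⟩
  · intro t ht
    have hlim : Tendsto (fun r : ℝ => 1 - min 1 (6 * t / (3 + r))) atTop (nhds 1) := by
      have h1 : Tendsto (fun r : ℝ => 6 * t / (3 + r)) atTop (nhds 0) := by
        apply Tendsto.div_atTop (tendsto_const_nhds)
        exact tendsto_atTop_add_const_left _ 3 tendsto_id
      have h2 : Tendsto (fun r : ℝ => min 1 (6 * t / (3 + r))) atTop (nhds 0) := by
        have := Tendsto.min (tendsto_const_nhds (x := (1:ℝ))) h1
        simpa using this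
      have := Tendsto.sub (tendsto_const_nhds (x := (1:ℝ))) h2
      simpa using this
    apply tendsto_of_tendsto_of_tendsto_of_le_of_le' hlim tendsto_const_nhds
    · filter_upwards [eventually_gt_atTop (0:ℝ)] with r hr
      exact le_csSup (alphaSet_bddAbove t r) (mem_alphaSet t r ht hr)
    · filter_upwards [eventually_gt_atTop (0:ℝ)] with r hr
      exact csSup_le ⟨_, mem_alphaSet t r ht hr⟩ (fun a ha => ha.2.1)
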